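/- For the forward–backward algorithm with deviations, for every x* ∈ zer(A + C) the real sequence (‖x_n − x*‖_M)_{n≥0} converges. -/

import Mathlib

open Filter
open scoped RealInnerProductSpace Pointwise Topology

/-- The `M`-induced norm `‖w‖_M = √⟪w, M w⟫`. -/
noncomputable def mnorm {H : Type*} [NormedAddCommGroup H] [InnerProductSpace ℝ H]
    (M : H →L[ℝ] H) (w : H) : ℝ :=
  Real.sqrt ⟪w, M w⟫

lemma expandB {H : Type*} [NormedAddCommGroup H] [InnerProductSpace ℝ H]
    (M : H →L[ℝ] H) (hsym : ∀ a b : H, ⟪a, M b⟫ = ⟪b, M a⟫)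
    (c1 c2 c3 c4 d1 d2 d3 d4 : ℝ) (s U V q : H) :
    ⟪c1•s + c2•U + c3•V + c4•q, M (d1•s + d2•U + d3•V + d4•q)⟫ =
      c1*d1*⟪s, M s⟫ + (c1*d2+c2*d1)*⟪s, M U⟫ + (c1*d3+c3*d1)*⟪s, M V⟫
      + (c1*d4+c4*d1)*⟪s, M q⟫ + c2*d2*⟪U, M U⟫ + (c2*d3+c3*d2)*⟪U, M V⟫
      + (c2*d4+c4*d2)*⟪U, M q⟫ + c3*d3*⟪V, M V⟫ + (c3*d4+c4*d3)*⟪V, M q⟫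
      + c4*d4*⟪q, M q⟫ := by
  simp only [map_add, map_smul, inner_add_left, inner_add_right,
    real_inner_smul_left, real_inner_smul_right]
  rw [hsym U s, hsym V s, hsym V U, hsym q s, hsym q U, hsym q V]
  ring

set_option maxHeartbeats 2000000 in
lemma key_step {H : Type*} [NormedAddCommGroup H] [InnerProductSpace ℝ H]
    (M : H →L[ℝ] H)
    (hMsa : ∀ a b : H, ⟪M a, b⟫ = ⟪a, M b⟫)
    (hQpos : ∀ w : H, 0 ≤ ⟪w, M w⟫)
    (Minv : H →L[ℝ] H)
    (hMinv₂ : ∀ a : H, M (Minv a) = a)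
    (β : ℝ) (hβ : 0 < β)
    (A : H → Set H)
    (hAmono : ∀ a b ua vb : H, ua ∈ A a → vb ∈ A b → ⟪ua - vb, a - b⟫ ≥ 0)
    (C : H → H)
    (hC : ∀ a b : H, ⟪C a - C b, a - b⟫ ≥ (1 / β) * mnorm Minv (C a - C b) ^ 2)
    (xs : H) (hxs : -C xs ∈ A xs)
    (ε : ℝ) (hε0 : 0 < ε)
    (l g : ℝ) (hg : ε ≤ g) (hl : ε ≤ l) (hlu : l ≤ 2 - g * β / 2 - ε / 2)
    (xn un vn pn yn zn xn1 : H)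
    (hy : yn = xn + un)
    (hz : zn = xn + (((1 - l) * g * β) / (2 - l * g * β)) • un + vn)
    (hp : M zn - M pn - g • C yn ∈ g • A pn)
    (hx : xn1 = xn + l • (pn - zn)) :
    ⟪xn1 - xs, M (xn1 - xs)⟫
      + (l * (4 - 2*l - g*β) / 2) *
        ⟪pn - xn + ((l*g*β)/(2 - l*g*β)) • un - ((2*(1-l))/(4 - 2*l - g*β)) • vn,
          M (pn - xn + ((l*g*β)/(2 - l*g*β)) • un - ((2*(1-l))/(4 - 2*l - g*β)) • vn)⟫
      ≤ ⟪xn - xs, M (xn - xs)⟫ + (l*g*β/(2 - l*g*β)) * ⟪un, M un⟫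
        + (l*(2 - l*g*β)/(4 - 2*l - g*β)) * ⟪vn, M vn⟫ := by
  have hsym : ∀ a b : H, ⟪a, M b⟫ = ⟪b, M a⟫ := fun a b =>
    (hMsa a b).symm.trans (real_inner_comm _ _)
  have hl0 : 0 < l := lt_of_lt_of_le hε0 hl
  have hg0 : 0 < g := lt_of_lt_of_le hε0 hg
  have hgb : 0 < g * β := mul_pos hg0 hβ
  have hD2 : 0 < 4 - 2*l - g*β := by linarith
  have hD1 : 0 < 2 - l * g * β := by
    have h := mul_le_mul_of_nonneg_right hlu hgb.le
    nlinarith [sq_nonneg (g*β - 2)]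
  -- Step A: operator inequality
  rw [Set.mem_smul_set] at hp
  obtain ⟨w, hwA, hweq⟩ := hp
  have hmono := hAmono pn xs w (-C xs) hwA hxs
  rw [sub_neg_eq_add] at hmono
  have h1 : 0 ≤ ⟪M zn - M pn - g • C yn + g • C xs, pn - xs⟫ := by
    rw [← hweq, ← smul_add, real_inner_smul_left]
    exact mul_nonneg hg0.le hmono
  have hA1 : g * ⟪C yn - C xs, pn - xs⟫ ≤ ⟪M zn - M pn, pn - xs⟫ := by
    simp only [inner_sub_left, inner_add_left, real_inner_smul_left] at h1 ⊢
    linarith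
  -- cocoercivity
  set w' := C yn - C xs with hw'
  have hQinv : 0 ≤ ⟪w', Minv w'⟫ := by
    have : ⟪w', Minv w'⟫ = ⟪Minv w', M (Minv w')⟫ := by
      rw [hMinv₂, real_inner_comm]
    rw [this]; exact hQpos _
  have hco : (1/β) * ⟪w', Minv w'⟫ ≤ ⟪w', yn - xs⟫ := by
    have h := hC yn xs
    rwa [mnorm, Real.sq_sqrt hQinv] at h
  -- Young
  set d := pn - yn with hd
  have hyoung : 0 ≤ ⟪w', d⟫ + (1/β) * ⟪w', Minv w'⟫ + (β/4) * ⟪d, M d⟫ := by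
    have h0 := hQpos (Minv w' + (β/2) • d)
    simp only [map_add, map_smul, inner_add_left, inner_add_right,
      real_inner_smul_left, real_inner_smul_right, hMinv₂] at h0
    rw [real_inner_comm w' (Minv w'), hsym (Minv w') d, hMinv₂ w'] at h0
    simp only [real_inner_comm w' d] at h0
    have key : 0 ≤ β * ⟪w', d⟫ + ⟪w', Minv w'⟫ + β^2/4 * ⟪d, M d⟫ := by nlinarith [h0]
    have hfac : ⟪w', d⟫ + (1/β) * ⟪w', Minv w'⟫ + (β/4) * ⟪d, M d⟫
        = (1/β) * (β * ⟪w', d⟫ + ⟪w', Minv w'⟫ + β^2/4 * ⟪d, M d⟫) := by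
      field_simp
    rw [hfac]
    exact mul_nonneg (by positivity) key
  -- combine
  have hsplit : ⟪w', pn - xs⟫ = ⟪w', d⟫ + ⟪w', yn - xs⟫ := by
    rw [← inner_add_right]
    congr 1
    simp [hd]
  have HA : 0 ≤ ⟪zn - pn, M (pn - xs)⟫ + (g*β/4) * ⟪d, M d⟫ := by
    have hMz : ⟪M zn - M pn, pn - xs⟫ = ⟪zn - pn, M (pn - xs)⟫ := by
      rw [← map_sub, hMsa]
    rw [← hMz]
    have h2 : g * ⟪w', pn - xs⟫ ≥ g * (-(β/4) * ⟪d, M d⟫) := by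
      rw [hsplit]
      have := mul_le_mul_of_nonneg_left hyoung hg0.le
      have := mul_le_mul_of_nonneg_left hco hg0.le
      nlinarith
    nlinarith
  -- Step B: algebraic identity (denominator-cleared)
  set sv := xn - xs with hsv
  set q := pn - xn with hq
  have hsm : ∀ (c : ℝ) (w : H), ⟪c • w, M (c • w)⟫ = c^2 * ⟪w, M w⟫ := by
    intro c w
    rw [map_smul, real_inner_smul_left, real_inner_smul_right]; ring
  have E1 : (2 - l*g*β) • (zn - pn)
      = (0:ℝ)•sv + ((1-l)*g*β)•un + (2 - l*g*β)•vn + (-(2 - l*g*β))•q := by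
    rw [hz, hsv, hq]
    match_scalars <;> field_simp <;> ring
  have e2 : pn - xs = (1:ℝ)•sv + (0:ℝ)•un + (0:ℝ)•vn + (1:ℝ)•q := by
    rw [hsv, hq]; module
  have e3 : d = (0:ℝ)•sv + (-1:ℝ)•un + (0:ℝ)•vn + (1:ℝ)•q := by
    rw [hd, hy, hsv, hq]; module
  have E4 : (2 - l*g*β) • (xn1 - xs)
      = (2 - l*g*β)•sv + (-(l*(1-l)*g*β))•un + (-(l*(2 - l*g*β)))•vn + (l*(2 - l*g*β))•q := by
    rw [hx, hz, hsv, hq]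
    match_scalars <;> field_simp <;> ring
  have E5 : ((2 - l*g*β)*(4 - 2*l - g*β)) •
        (pn - xn + ((l*g*β)/(2 - l*g*β)) • un - ((2*(1-l))/(4 - 2*l - g*β)) • vn)
      = (0:ℝ)•sv + (l*g*β*(4 - 2*l - g*β))•un + (-(2*(1-l)*(2 - l*g*β)))•vn
        + ((2 - l*g*β)*(4 - 2*l - g*β))•q := by
    rw [hsv, hq]
    match_scalars <;> field_simp <;> ring
  have hident : (2 - l*g*β)^2*(4 - 2*l - g*β) * ⟪sv, M sv⟫
      + l*g*β*(2 - l*g*β)*(4 - 2*l - g*β) * ⟪un, M un⟫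
      + l*(2 - l*g*β)^3 * ⟪vn, M vn⟫
      - (4 - 2*l - g*β) * ⟪(2 - l*g*β) • (xn1 - xs), M ((2 - l*g*β) • (xn1 - xs))⟫
      - (l/2) * ⟪((2 - l*g*β)*(4 - 2*l - g*β)) •
          (pn - xn + ((l*g*β)/(2 - l*g*β)) • un - ((2*(1-l))/(4 - 2*l - g*β)) • vn),
        M (((2 - l*g*β)*(4 - 2*l - g*β)) •
          (pn - xn + ((l*g*β)/(2 - l*g*β)) • un - ((2*(1-l))/(4 - 2*l - g*β)) • vn))⟫
      = 2*l*(2 - l*g*β)*(4 - 2*l - g*β) * ⟪(2 - l*g*β) • (zn - pn), M (pn - xs)⟫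
        + (l*g*β/2)*(2 - l*g*β)^2*(4 - 2*l - g*β) * ⟪d, M d⟫ := by
    rw [E1, e2, e3, E4, E5, expandB M hsym, expandB M hsym, expandB M hsym, expandB M hsym]
    ring
  rw [hsm, hsm, real_inner_smul_left] at hident
  have hpos : (0:ℝ) < (2 - l*g*β)^2*(4 - 2*l - g*β) := by positivity
  have hHA' : 0 ≤ 2*l*(2 - l*g*β)^2*(4 - 2*l - g*β) *
      (⟪zn - pn, M (pn - xs)⟫ + (g*β/4) * ⟪d, M d⟫) := by
    apply mul_nonneg _ HA
    positivity
  have hfinal : (2 - l*g*β)^2*(4 - 2*l - g*β) *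
        (⟪xn1 - xs, M (xn1 - xs)⟫ + (l * (4 - 2*l - g*β) / 2) *
          ⟪pn - xn + ((l*g*β)/(2 - l*g*β)) • un - ((2*(1-l))/(4 - 2*l - g*β)) • vn,
            M (pn - xn + ((l*g*β)/(2 - l*g*β)) • un - ((2*(1-l))/(4 - 2*l - g*β)) • vn)⟫)
      ≤ (2 - l*g*β)^2*(4 - 2*l - g*β) *
        (⟪sv, M sv⟫ + (l*g*β/(2 - l*g*β)) * ⟪un, M un⟫
          + (l*(2 - l*g*β)/(4 - 2*l - g*β)) * ⟪vn, M vn⟫) := by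
    have e_r : (2 - l*g*β)^2*(4 - 2*l - g*β) *
        (⟪sv, M sv⟫ + (l*g*β/(2 - l*g*β)) * ⟪un, M un⟫
          + (l*(2 - l*g*β)/(4 - 2*l - g*β)) * ⟪vn, M vn⟫)
        = (2 - l*g*β)^2*(4 - 2*l - g*β) * ⟪sv, M sv⟫
          + l*g*β*(2 - l*g*β)*(4 - 2*l - g*β) * ⟪un, M un⟫
          + l*(2 - l*g*β)^3 * ⟪vn, M vn⟫ := by
      field_simp
    rw [e_r]
    nlinarith [hident, hHA']
  exact le_of_mul_le_mul_left hfinal hpos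

/-- for every zero of A + C, the M-distance sequence converges. -/
theorem distance_sequence_converges
    {H : Type*} [NormedAddCommGroup H] [InnerProductSpace ℝ H] [CompleteSpace H]
    (M : H →L[ℝ] H)
    (hMsa : ∀ a b : H, ⟪M a, b⟫ = ⟪a, M b⟫)
    (hMpos : ∃ c > (0:ℝ), ∀ a : H, ⟪a, M a⟫ ≥ c * ‖a‖ ^ 2)
    (Minv : H →L[ℝ] H)
    (hMinv₁ : ∀ a : H, Minv (M a) = a)
    (hMinv₂ : ∀ a : H, M (Minv a) = a)
    (β : ℝ) (hβ : 0 < β)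
    (A : H → Set H)
    (hAmono : ∀ a b ua vb : H, ua ∈ A a → vb ∈ A b → ⟪ua - vb, a - b⟫ ≥ 0)
    (hAmax : ∀ a ua : H, (∀ b vb : H, vb ∈ A b → ⟪ua - vb, a - b⟫ ≥ 0) → ua ∈ A a)
    (C : H → H)
    (hC : ∀ a b : H, ⟪C a - C b, a - b⟫ ≥ (1 / β) * mnorm Minv (C a - C b) ^ 2)
    (hzer : ∃ w : H, -C w ∈ A w)
    (ε : ℝ) (hε0 : 0 < ε) (hε1 : ε < min 1 (4 / (3 + β)))
    (ζ γ lam : ℕ → ℝ)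
    (hζ : ∀ n, 0 ≤ ζ n ∧ ζ n ≤ 1 - ε)
    (hγ : ∀ n, ε ≤ γ n ∧ γ n ≤ (4 - 3 * ε) / β)
    (hlam : ∀ n, ε ≤ lam n ∧ lam n ≤ 2 - γ n * β / 2 - ε / 2)
    (x u v p y z : ℕ → H) (ℓsq : ℕ → ℝ)
    (hu0 : u 0 = 0) (hv0 : v 0 = 0)
    (hy : ∀ n, y n = x n + u n)
    (hz : ∀ n, z n = x n + (((1 - lam n) * γ n * β) / (2 - lam n * γ n * β)) • u n + v n)
    (hp : ∀ n, M (z n) - M (p n) - γ n • C (y n) ∈ γ n • A (p n))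
    (hx : ∀ n, x (n + 1) = x n + lam n • (p n - z n))
    (hℓ : ∀ n, ℓsq n = (lam n * (4 - 2 * lam n - γ n * β) / 2) *
      mnorm M (p n - x n + ((lam n * γ n * β) / (2 - lam n * γ n * β)) • u n
        - ((2 * (1 - lam n)) / (4 - 2 * lam n - γ n * β)) • v n) ^ 2)
    (hdev : ∀ n, (lam (n+1) * γ (n+1) * β / (2 - lam (n+1) * γ (n+1) * β)) * mnorm M (u (n+1)) ^ 2
        + (lam (n+1) * (2 - lam (n+1) * γ (n+1) * β) / (4 - 2 * lam (n+1) - γ (n+1) * β)) * mnorm M (v (n+1)) ^ 2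
        ≤ ζ n * ℓsq n)
    :
    ∀ xs : H, -C xs ∈ A xs →
      ∃ r : ℝ, Tendsto (fun n => mnorm M (x n - xs)) atTop (𝓝 r) := by
  obtain ⟨c0, hc0, hMp⟩ := hMpos
  have hQpos : ∀ w : H, 0 ≤ ⟪w, M w⟫ := fun w =>
    le_trans (by positivity) (hMp w)
  have mnsq : ∀ w : H, mnorm M w ^ 2 = ⟪w, M w⟫ := fun w => Real.sq_sqrt (hQpos w)
  intro xs hxs
  set a : ℕ → ℝ := fun n => ⟪x n - xs, M (x n - xs)⟫ with haD
  set e : ℕ → ℝ := fun n =>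
    (lam n * γ n * β / (2 - lam n * γ n * β)) * ⟪u n, M (u n)⟫
    + (lam n * (2 - lam n * γ n * β) / (4 - 2 * lam n - γ n * β)) * ⟪v n, M (v n)⟫ with heD
  set S : ℕ → ℝ := fun n => a n + e n with hSD
  have hl0 : ∀ n, 0 < lam n := fun n => lt_of_lt_of_le hε0 (hlam n).1
  have hg0 : ∀ n, 0 < γ n := fun n => lt_of_lt_of_le hε0 (hγ n).1
  have hD2 : ∀ n, 0 < 4 - 2 * lam n - γ n * β := fun n => by
    have h1 := (hlam n).2; linarith
  have hD1 : ∀ n, 0 < 2 - lam n * γ n * β := fun n => by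
    have hgb : 0 < γ n * β := mul_pos (hg0 n) hβ
    have h := mul_le_mul_of_nonneg_right (hlam n).2 hgb.le
    nlinarith [sq_nonneg (γ n * β - 2)]
  have hℓnonneg : ∀ n, 0 ≤ ℓsq n := fun n => by
    rw [hℓ n]
    exact mul_nonneg (div_nonneg (mul_nonneg (hl0 n).le (by linarith [hD2 n])) (by norm_num))
      (sq_nonneg _)
  have hkey : ∀ n, a (n + 1) + ℓsq n ≤ a n + e n := fun n => by
    have h := key_step M hMsa hQpos Minv hMinv₂ β hβ A hAmono C hC xs hxs ε hε0
      (lam n) (γ n) (hγ n).1 (hlam n).1 (hlam n).2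
      (x n) (u n) (v n) (p n) (y n) (z n) (x (n + 1))
      (hy n) (hz n) (hp n) (hx n)
    have hℓn : ℓsq n = (lam n * (4 - 2 * lam n - γ n * β) / 2) *
        ⟪p n - x n + ((lam n * γ n * β) / (2 - lam n * γ n * β)) • u n
          - ((2 * (1 - lam n)) / (4 - 2 * lam n - γ n * β)) • v n,
         M (p n - x n + ((lam n * γ n * β) / (2 - lam n * γ n * β)) • u n
          - ((2 * (1 - lam n)) / (4 - 2 * lam n - γ n * β)) • v n)⟫ := by
      rw [hℓ n, mnsq]
    simp only [haD, heD]
    rw [hℓn]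
    linarith [h]
  have he : ∀ n, 0 ≤ e n := fun n => by
    simp only [heD]
    have h1 : 0 ≤ lam n * γ n * β / (2 - lam n * γ n * β) :=
      div_nonneg (mul_nonneg (mul_nonneg (hl0 n).le (hg0 n).le) hβ.le) (hD1 n).le
    have h2 : 0 ≤ lam n * (2 - lam n * γ n * β) / (4 - 2 * lam n - γ n * β) :=
      div_nonneg (mul_nonneg (hl0 n).le (hD1 n).le) (hD2 n).le
    exact add_nonneg (mul_nonneg h1 (hQpos _)) (mul_nonneg h2 (hQpos _))
  have ha : ∀ n, 0 ≤ a n := fun n => hQpos _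
  have hdev' : ∀ n, e (n + 1) ≤ ζ n * ℓsq n := fun n => by
    have h := hdev n
    rw [mnsq, mnsq] at h
    simpa [heD] using h
  have hSmono : ∀ n, S (n + 1) + ε * ℓsq n ≤ S n := fun n => by
    have h1 := hkey n
    have h2 := hdev' n
    have h3 : ζ n * ℓsq n ≤ (1 - ε) * ℓsq n :=
      mul_le_mul_of_nonneg_right (hζ n).2 (hℓnonneg n)
    simp only [hSD]
    nlinarith
  have hanti : Antitone S := antitone_nat_of_succ_le fun n => by
    have h1 := hSmono n
    have h2 := mul_nonneg hε0.le (hℓnonneg n)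
    linarith
  have hbdd : BddBelow (Set.range S) := by
    refine ⟨0, ?_⟩
    rintro r ⟨n, rfl⟩
    exact add_nonneg (ha n) (he n)
  have hSconv : Tendsto S atTop (𝓝 (⨅ n, S n)) := tendsto_atTop_ciInf hanti hbdd
  set L : ℝ := ⨅ n, S n with hLD
  have hS1 : Tendsto (fun n => S (n + 1)) atTop (𝓝 L) :=
    hSconv.comp (tendsto_add_atTop_nat 1)
  have hdiff : Tendsto (fun n => S n - S (n + 1)) atTop (𝓝 0) := by
    have := hSconv.sub hS1
    simpa using this
  have hℓ0 : Tendsto ℓsq atTop (𝓝 0) := by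
    have hub : ∀ n, ℓsq n ≤ (S n - S (n + 1)) / ε := fun n =>
      (le_div_iff₀ hε0).2 (by linarith [hSmono n] : ℓsq n * ε ≤ S n - S (n + 1))
    have hub0 : Tendsto (fun n => (S n - S (n + 1)) / ε) atTop (𝓝 0) := by
      simpa using hdiff.div_const ε
    exact squeeze_zero hℓnonneg hub hub0
  have he0' : Tendsto (fun n => e (n + 1)) atTop (𝓝 0) := by
    refine squeeze_zero (fun n => he (n + 1)) (fun n => ?_) hℓ0
    exact le_trans (hdev' n)
      (mul_le_of_le_one_left (hℓnonneg n) (le_trans (hζ n).2 (by linarith)))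
  have he0 : Tendsto e atTop (𝓝 0) := (tendsto_add_atTop_iff_nat 1).1 he0'
  have haconv : Tendsto a atTop (𝓝 L) := by
    have h := hSconv.sub he0
    have heq : (fun n => S n - e n) = a := by
      funext n; simp only [hSD]; ring
    rw [heq] at h
    simpa using h
  refine ⟨Real.sqrt L, ?_⟩
  have h := (Real.continuous_sqrt.tendsto L).comp haconv
  simpa [mnorm, haD, Function.comp_def] using h
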